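/- There exists a constant a > 0 such that for all positive integers m, the number p(m) of partitions of m satisfies log p(m) ≤ a · √m. -/

import Mathlib

open Finset Real

namespace PartitionBound

/-- Every part of a partition of `n` lies in `Icc 1 n`. -/
lemma part_mem_Icc {n : ℕ} (P : Nat.Partition n) {a : ℕ} (ha : a ∈ P.parts) :
    a ∈ Finset.Icc 1 n := by
  rw [Finset.mem_Icc]
  refine ⟨P.parts_pos ha, ?_⟩
  calc a ≤ P.parts.sum := Multiset.single_le_sum (fun x _ => Nat.zero_le x) a ha
    _ = n := P.parts_sum

lemma count_le {n : ℕ} (P : Nat.Partition n) (k : ℕ) :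
    P.parts.count k ≤ n := by
  calc P.parts.count k ≤ Multiset.card P.parts := Multiset.count_le_card _ _
    _ ≤ P.parts.sum := by
        have := Multiset.card_nsmul_le_sum (s := P.parts) (a := 1)
          (fun x hx => P.parts_pos hx)
        simpa using this
    _ = n := P.parts_sum

lemma sum_count_eq {n : ℕ} (P : Nat.Partition n) :
    ∑ k ∈ Finset.Icc 1 n, P.parts.count k * k = n := by
  have h0 : ∑ k ∈ P.parts.toFinset, P.parts.count k * k = n := by
    have h1 := congrArg Multiset.sum (Multiset.toFinset_sum_count_nsmul_eq P.parts)
    rw [P.parts_sum] at h1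
    have h2 : (∑ a ∈ P.parts.toFinset, P.parts.count a • ({a} : Multiset ℕ)).sum
        = ∑ a ∈ P.parts.toFinset, P.parts.count a * a := by
      rw [← Multiset.coe_sumAddMonoidHom, map_sum]
      refine Finset.sum_congr rfl fun a _ => ?_
      simp [Multiset.coe_sumAddMonoidHom, Multiset.nsmul_singleton,
        Multiset.sum_replicate]
    rw [h2] at h1
    exact h1
  calc ∑ k ∈ Finset.Icc 1 n, P.parts.count k * k
      = ∑ k ∈ P.parts.toFinset, P.parts.count k * k := by
        refine (Finset.sum_subset ?_ ?_).symm
        · intro a ha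
          exact part_mem_Icc P (Multiset.mem_toFinset.mp ha)
        · intro a _ ha
          rw [Multiset.count_eq_zero_of_notMem
            (fun h => ha (Multiset.mem_toFinset.mpr h)), Nat.zero_mul]
    _ = n := h0

/-- Injectivity of the count function. -/
lemma count_inj {n : ℕ} (P Q : Nat.Partition n)
    (h : ∀ k ∈ Finset.Icc 1 n, P.parts.count k = Q.parts.count k) : P = Q := by
  ext a
  by_cases ha : a ∈ Finset.Icc 1 n
  · exact h a ha
  · rw [Multiset.count_eq_zero_of_notMem, Multiset.count_eq_zero_of_notMem]
    · exact fun hm => ha (part_mem_Icc Q hm)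
    · exact fun hm => ha (part_mem_Icc P hm)

/-- Key combinatorial bound: `p(n) xⁿ ≤ ∏_{k=1}^n (1-xᵏ)⁻¹`. -/
lemma card_mul_pow_le {n : ℕ} (x : ℝ) (hx0 : 0 < x) (hx1 : x < 1) :
    (Fintype.card (Nat.Partition n) : ℝ) * x ^ n ≤
      ∏ k ∈ Finset.Icc 1 n, (1 - x ^ k)⁻¹ := by
  classical
  set S : Finset ℕ := Finset.Icc 1 n with hS
  set T := S.pi (fun _ => Finset.range (n + 1)) with hT
  set term : (∀ k ∈ S, ℕ) → ℝ := fun p => ∏ k ∈ S.attach, x ^ (p k.1 k.2 * k.1) with hterm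
  -- map partitions to T
  set Φ : Nat.Partition n → (∀ k ∈ S, ℕ) := fun P k _ => P.parts.count k with hΦ
  have hterm_eq : ∀ P : Nat.Partition n, term (Φ P) = x ^ n := by
    intro P
    rw [hterm]
    simp only
    rw [Finset.prod_pow_eq_pow_sum]
    congr 1
    rw [← sum_count_eq P]
    exact Finset.sum_attach S (fun k => P.parts.count k * k)
  have hinj : ∀ P ∈ (Finset.univ : Finset (Nat.Partition n)),
      ∀ Q ∈ (Finset.univ : Finset (Nat.Partition n)), Φ P = Φ Q → P = Q := by
    intro P _ Q _ hPQ
    refine count_inj P Q fun k hk => ?_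
    exact congrFun (congrFun hPQ k) hk
  have step1 : (Fintype.card (Nat.Partition n) : ℝ) * x ^ n
      = ∑ q ∈ (Finset.univ : Finset (Nat.Partition n)).image Φ, term q := by
    rw [Finset.sum_image hinj]
    rw [Finset.sum_congr rfl (fun P _ => hterm_eq P)]
    simp [Finset.card_univ, mul_comm]
  have hsubset : (Finset.univ : Finset (Nat.Partition n)).image Φ ⊆ T := by
    intro q hq
    rw [Finset.mem_image] at hq
    obtain ⟨P, _, rfl⟩ := hq
    rw [hT, Finset.mem_pi]
    intro k hk
    rw [Finset.mem_range]
    exact Nat.lt_succ_of_le (count_le P k)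
  have hnonneg : ∀ q ∈ T, 0 ≤ term q := by
    intro q _
    exact Finset.prod_nonneg fun k _ => pow_nonneg hx0.le _
  have step2 : ∑ q ∈ (Finset.univ : Finset (Nat.Partition n)).image Φ, term q
      ≤ ∑ q ∈ T, term q :=
    Finset.sum_le_sum_of_subset_of_nonneg hsubset (fun q hq _ => hnonneg q hq)
  have step3 : ∑ q ∈ T, term q = ∏ k ∈ S, ∑ m ∈ Finset.range (n + 1), x ^ (m * k) := by
    rw [Finset.prod_sum]
  have step4 : ∏ k ∈ S, ∑ m ∈ Finset.range (n + 1), x ^ (m * k)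
      ≤ ∏ k ∈ S, (1 - x ^ k)⁻¹ := by
    refine Finset.prod_le_prod (fun k _ => Finset.sum_nonneg fun m _ =>
      pow_nonneg hx0.le _) (fun k _ => ?_)
    rename_i hk
    have hk1 : 1 ≤ k := (Finset.mem_Icc.mp hk).1
    have hxk0 : 0 ≤ x ^ k := pow_nonneg hx0.le _
    have hxk1 : x ^ k < 1 := pow_lt_one₀ hx0.le hx1 (Nat.one_le_iff_ne_zero.mp hk1)
    calc ∑ m ∈ Finset.range (n + 1), x ^ (m * k)
        = ∑ m ∈ Finset.range (n + 1), (x ^ k) ^ m := by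
          refine Finset.sum_congr rfl fun m _ => ?_
          rw [← pow_mul, Nat.mul_comm]
      _ ≤ ∑' m : ℕ, (x ^ k) ^ m := Summable.sum_le_tsum _ (fun m _ => pow_nonneg hxk0 _)
          (summable_geometric_of_lt_one hxk0 hxk1)
      _ = (1 - x ^ k)⁻¹ := tsum_geometric_of_lt_one hxk0 hxk1
  calc (Fintype.card (Nat.Partition n) : ℝ) * x ^ n
      = ∑ q ∈ (Finset.univ : Finset (Nat.Partition n)).image Φ, term q := step1
    _ ≤ ∑ q ∈ T, term q := step2
    _ = ∏ k ∈ S, ∑ m ∈ Finset.range (n + 1), x ^ (m * k) := step3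
    _ ≤ ∏ k ∈ S, (1 - x ^ k)⁻¹ := step4

/-- `exp(-u)/(1-exp(-u)) ≤ 1/u` for `u > 0`. -/
lemma exp_div_le {u : ℝ} (hu : 0 < u) :
    Real.exp (-u) / (1 - Real.exp (-u)) ≤ 1 / u := by
  have h1 : Real.exp (-u) < 1 := Real.exp_lt_one_iff.mpr (by linarith)
  have h2 : 0 < 1 - Real.exp (-u) := by linarith
  rw [div_le_div_iff₀ h2 hu]
  have h3 : (u + 1) * Real.exp (-u) ≤ 1 := by
    have h4 : u + 1 ≤ Real.exp u := by have := Real.add_one_le_exp u; linarith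
    calc (u + 1) * Real.exp (-u) ≤ Real.exp u * Real.exp (-u) :=
          mul_le_mul_of_nonneg_right h4 (Real.exp_nonneg _)
      _ = 1 := by rw [← Real.exp_add]; simp
  nlinarith [Real.exp_nonneg (-u)]

lemma hasSum_shift : HasSum (fun j : ℕ => 1 / ((j : ℝ) + 1) ^ 2) (π ^ 2 / 6) := by
  have h := (hasSum_nat_add_iff' (f := fun n : ℕ => (1 : ℝ) / (n : ℝ) ^ 2) 1).2 hasSum_zeta_two
  simp only [Finset.range_one, Finset.sum_singleton, Nat.cast_zero] at h
  have : (π ^ 2 / 6 - 1 / (0:ℝ) ^ 2) = π ^ 2 / 6 := by norm_num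
  rw [this] at h
  convert h using 2 with j
  · rfl
  · push_cast
    ring

/-- Analytic bound: `∑_{k=1}^n -log(1 - e^{-kt}) ≤ (π²/6)/t`. -/
lemma sum_neg_log_le (n : ℕ) {t : ℝ} (ht : 0 < t) :
    ∑ k ∈ Finset.Icc 1 n, (-Real.log (1 - Real.exp (-t) ^ k)) ≤ π ^ 2 / 6 * t⁻¹ := by
  set x := Real.exp (-t) with hx
  have hx0 : 0 < x := Real.exp_pos _
  have hx1 : x < 1 := Real.exp_lt_one_iff.mpr (by linarith)
  have hxpow : ∀ j : ℕ, 1 ≤ j → x ^ j / (1 - x ^ j) ≤ 1 / (j * t) := by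
    intro j hj
    have hxj : x ^ j = Real.exp (-(j * t)) := by
      rw [hx, ← Real.exp_nat_mul]
      congr 1
      ring
    rw [hxj]
    have hjt : 0 < (j : ℝ) * t := by
      have : (1:ℝ) ≤ (j:ℝ) := by exact_mod_cast hj
      positivity
    exact exp_div_le hjt
  -- each log is a sum of the power series
  have hhs : ∀ k ∈ Finset.Icc 1 n,
      HasSum (fun j : ℕ => (x ^ k) ^ (j + 1) / (j + 1)) (-Real.log (1 - x ^ k)) := by
    intro k hk
    have hk1 : 1 ≤ k := (Finset.mem_Icc.mp hk).1
    have : |x ^ k| < 1 := by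
      rw [abs_of_nonneg (pow_nonneg hx0.le _)]
      exact pow_lt_one₀ hx0.le hx1 (Nat.one_le_iff_ne_zero.mp hk1)
    exact hasSum_pow_div_log_of_abs_lt_one this
  have htot : HasSum (fun j : ℕ => ∑ k ∈ Finset.Icc 1 n, (x ^ k) ^ (j + 1) / (j + 1))
      (∑ k ∈ Finset.Icc 1 n, (-Real.log (1 - x ^ k))) := hasSum_sum hhs
  -- the majorant
  set G : ℕ → ℝ := fun j => t⁻¹ * (1 / ((j : ℝ) + 1) ^ 2) with hG
  have hGsum : HasSum G (t⁻¹ * (π ^ 2 / 6)) := hasSum_shift.mul_left _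
  have hFG : ∀ j : ℕ, ∑ k ∈ Finset.Icc 1 n, (x ^ k) ^ (j + 1) / (j + 1) ≤ G j := by
    intro j
    set y := x ^ (j + 1) with hy
    have hy0 : 0 < y := pow_pos hx0 _
    have hy1 : y < 1 := pow_lt_one₀ hx0.le hx1 (Nat.succ_ne_zero j)
    have hswap : ∀ k : ℕ, (x ^ k) ^ (j + 1) = y ^ k := by
      intro k
      rw [hy, ← pow_mul, ← pow_mul, Nat.mul_comm]
    have hgeom : ∑ k ∈ Finset.Icc 1 n, y ^ k ≤ y / (1 - y) := by
      have h1 : ∑ k ∈ Finset.Icc 1 n, y ^ k = y * ∑ i ∈ Finset.range n, y ^ i := by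
        rw [← Finset.Ico_add_one_right_eq_Icc, Finset.sum_Ico_eq_sum_range, Finset.mul_sum]
        simp [pow_add]
      rw [h1]
      have h2 : ∑ i ∈ Finset.range n, y ^ i ≤ (1 - y)⁻¹ := by
        refine le_trans (Summable.sum_le_tsum _ (fun i _ => pow_nonneg hy0.le _)
          (summable_geometric_of_lt_one hy0.le hy1)) ?_
        rw [tsum_geometric_of_lt_one hy0.le hy1]
      calc y * ∑ i ∈ Finset.range n, y ^ i ≤ y * (1 - y)⁻¹ :=
            mul_le_mul_of_nonneg_left h2 hy0.le
        _ = y / (1 - y) := by rw [div_eq_mul_inv]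
    have hyt : y / (1 - y) ≤ 1 / ((j + 1 : ℕ) * t) := hxpow (j + 1) (Nat.le_add_left 1 j)
    calc ∑ k ∈ Finset.Icc 1 n, (x ^ k) ^ (j + 1) / (j + 1)
        = (∑ k ∈ Finset.Icc 1 n, y ^ k) / (j + 1) := by
          rw [Finset.sum_div]
          exact Finset.sum_congr rfl fun k _ => by rw [hswap]
      _ ≤ (y / (1 - y)) / (j + 1) := by
          apply div_le_div_of_nonneg_right hgeom ?_ |>.trans_eq rfl
          positivity
      _ ≤ (1 / ((j + 1 : ℕ) * t)) / (j + 1) := by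
          apply div_le_div_of_nonneg_right hyt ?_ |>.trans_eq rfl
          positivity
      _ = G j := by
          rw [hG]
          push_cast
          field_simp
  calc ∑ k ∈ Finset.Icc 1 n, (-Real.log (1 - x ^ k))
      = ∑' j : ℕ, ∑ k ∈ Finset.Icc 1 n, (x ^ k) ^ (j + 1) / (j + 1) := htot.tsum_eq.symm
    _ ≤ ∑' j : ℕ, G j := Summable.tsum_le_tsum hFG htot.summable hGsum.summable
    _ = t⁻¹ * (π ^ 2 / 6) := hGsum.tsum_eq
    _ = π ^ 2 / 6 * t⁻¹ := by ring

end PartitionBound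

theorem stmt_5 :
    ∃ a : ℝ, 0 < a ∧ ∀ m : ℕ, 1 ≤ m →
      Real.log (Fintype.card (Nat.Partition m)) ≤ a * Real.sqrt m := by
  refine ⟨1 + π ^ 2 / 6, by positivity, fun m hm => ?_⟩
  set t : ℝ := (Real.sqrt m)⁻¹ with htdef
  have hm1 : (1 : ℝ) ≤ (m : ℝ) := by exact_mod_cast hm
  have hsq : 0 < Real.sqrt m := Real.sqrt_pos.mpr (by linarith)
  have ht : 0 < t := inv_pos.mpr hsq
  set x : ℝ := Real.exp (-t) with hx
  have hx0 : 0 < x := Real.exp_pos _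
  have hx1 : x < 1 := Real.exp_lt_one_iff.mpr (by linarith)
  have hcard : (0 : ℝ) < (Fintype.card (Nat.Partition m) : ℝ) := by
    exact_mod_cast Fintype.card_pos
  have hkey := PartitionBound.card_mul_pow_le (n := m) x hx0 hx1
  have hprodpos : 0 < ∏ k ∈ Finset.Icc 1 m, (1 - x ^ k)⁻¹ := by
    refine Finset.prod_pos fun k hk => ?_
    have : x ^ k < 1 :=
      pow_lt_one₀ hx0.le hx1 (Nat.one_le_iff_ne_zero.mp (Finset.mem_Icc.mp hk).1)
    have : 0 < 1 - x ^ k := by linarith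
    positivity
  have hlog1 : Real.log ((Fintype.card (Nat.Partition m) : ℝ) * x ^ m)
      ≤ Real.log (∏ k ∈ Finset.Icc 1 m, (1 - x ^ k)⁻¹) :=
    Real.log_le_log (by positivity) hkey
  have hlogprod : Real.log (∏ k ∈ Finset.Icc 1 m, (1 - x ^ k)⁻¹)
      = ∑ k ∈ Finset.Icc 1 m, (-Real.log (1 - x ^ k)) := by
    rw [Real.log_prod]
    · refine Finset.sum_congr rfl fun k hk => ?_
      rw [Real.log_inv]
    · intro k hk
      have : x ^ k < 1 :=
        pow_lt_one₀ hx0.le hx1 (Nat.one_le_iff_ne_zero.mp (Finset.mem_Icc.mp hk).1)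
      have : 0 < 1 - x ^ k := by linarith
      positivity
  have hloglhs : Real.log ((Fintype.card (Nat.Partition m) : ℝ) * x ^ m)
      = Real.log (Fintype.card (Nat.Partition m)) - m * t := by
    rw [Real.log_mul (ne_of_gt hcard) (by positivity), Real.log_pow, hx, Real.log_exp]
    ring
  have hmt : (m : ℝ) * t = Real.sqrt m := by
    rw [htdef]
    field_simp
    exact (Real.sq_sqrt (by positivity)).symm
  have hanalytic := PartitionBound.sum_neg_log_le m ht
  have htinv : t⁻¹ = Real.sqrt m := by rw [htdef, inv_inv]
  rw [hloglhs, hlogprod] at hlog1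
  rw [htinv] at hanalytic
  have : Real.log (Fintype.card (Nat.Partition m))
      ≤ m * t + π ^ 2 / 6 * Real.sqrt m := by
    have := hlog1.trans hanalytic
    linarith
  rw [hmt] at this
  linarith
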